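/- arXiv:2201.04779 — 5 statements merged into one kernel-verified Lean document; each statement's English description precedes it below -/
import Mathlib

section
/- Variable-capacity optimality of matching capacity to demand (Proposition 1): Fix a horizon N, an advertisement sequence A : {1,…,N} → {L,H} and an initial reputation R_1 ∈ [0,1]. For every capacity sequence S_1,…,S_N with S_i ≥ 0 for all i, the total profit under the general-capacity dynamics is at most the total profit obtained from the same advertisement sequence and initial reputation when in every period the capacity equals the realized demand (full-fill dynamics): Π_gen(A, S, R_1) ≤ Π(A, R_1). -/
noncomputable section

/-- Post-advertisement reputation map. -/
def frep (α R a : ℝ) : ℝ := R + (1 - R) * a ^ α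

/-- Demand function. -/
def dem (Λ q x : ℝ) : ℝ := if 0 < x then max 0 (Λ * (1 - q / x)) else 0

/-- Full-fill reputation trajectory (0-indexed periods). -/
def rep (α w Λ q : ℝ) (A : ℕ → ℝ) (R1 : ℝ) : ℕ → ℝ
  | 0 => R1
  | i + 1 =>
      let R' := frep α (rep α w Λ q A R1 i) (A i)
      if 0 < dem Λ q R' then (1 - w) * R' + w else R'

/-- Full-fill total profit over horizon `N`. -/
def profit (α w Λ q p c cA : ℝ) (A : ℕ → ℝ) (R1 : ℝ) (N : ℕ) : ℝ :=
  ∑ i ∈ Finset.range N,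
    ((p - c) * dem Λ q (frep α (rep α w Λ q A R1 i) (A i)) - cA * A i)


/-- General-capacity reputation trajectory: capacity sequence `S`. -/
def repG (α w Λ q : ℝ) (A S : ℕ → ℝ) (R1 : ℝ) : ℕ → ℝ
  | 0 => R1
  | i + 1 =>
      let R' := frep α (repG α w Λ q A S R1 i) (A i)
      let d := dem Λ q R'
      if 0 < d then (1 - w) * R' + w * (min (S i) d / d) else R'

/-- General-capacity total profit over horizon `N`. -/
def profitG (α w Λ q p c cA : ℝ) (A S : ℕ → ℝ) (R1 : ℝ) (N : ℕ) : ℝ :=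
  ∑ i ∈ Finset.range N,
    (p * min (S i) (dem Λ q (frep α (repG α w Λ q A S R1 i) (A i)))
      - c * S i - cA * A i)


section Aux

lemma dem_nonneg (Λ q x : ℝ) : 0 ≤ dem Λ q x := by
  unfold dem; split <;> simp [le_max_left]

lemma dem_mono (Λ q : ℝ) (hΛ : 0 ≤ Λ) (hq : 0 ≤ q) {x y : ℝ} (hxy : x ≤ y) :
    dem Λ q x ≤ dem Λ q y := by
  unfold dem
  by_cases hx : 0 < x
  · have hy : 0 < y := lt_of_lt_of_le hx hxy
    simp only [hx, hy, if_true]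
    have : q / y ≤ q / x := by gcongr
    have : Λ * (1 - q / x) ≤ Λ * (1 - q / y) := by nlinarith
    exact max_le_max le_rfl this
  · simp only [hx, if_false]
    split <;> simp [le_max_left]

lemma rpow_mem {a α : ℝ} (hα : 0 < α) (h0 : 0 ≤ a) (h1 : a ≤ 1) :
    0 ≤ a ^ α ∧ a ^ α ≤ 1 :=
  ⟨Real.rpow_nonneg h0 α, Real.rpow_le_one h0 h1 hα.le⟩

lemma frep_mem {α R a : ℝ} (hα : 0 < α) (hR0 : 0 ≤ R) (hR1 : R ≤ 1)
    (ha0 : 0 ≤ a) (ha1 : a ≤ 1) : 0 ≤ frep α R a ∧ frep α R a ≤ 1 := by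
  obtain ⟨h0, h1⟩ := rpow_mem hα ha0 ha1
  unfold frep
  constructor <;> nlinarith

lemma frep_mono {α R R' a : ℝ} (hα : 0 < α) (ha0 : 0 ≤ a) (ha1 : a ≤ 1)
    (h : R ≤ R') : frep α R a ≤ frep α R' a := by
  obtain ⟨h0, h1⟩ := rpow_mem hα ha0 ha1
  unfold frep; nlinarith

lemma combo_mem {w x f : ℝ} (hw0 : 0 ≤ w) (hw1 : w ≤ 1) (hx0 : 0 ≤ x)
    (hx1 : x ≤ 1) (hf0 : 0 ≤ f) (hf1 : f ≤ 1) :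
    0 ≤ (1 - w) * x + w * f ∧ (1 - w) * x + w * f ≤ 1 := by
  constructor <;> nlinarith

lemma combo_mem1 {w x : ℝ} (hw0 : 0 ≤ w) (hw1 : w ≤ 1) (hx0 : 0 ≤ x)
    (hx1 : x ≤ 1) : 0 ≤ (1 - w) * x + w ∧ (1 - w) * x + w ≤ 1 := by
  constructor <;> nlinarith

lemma combo_mono {w x y f : ℝ} (hw0 : 0 ≤ w) (hw1 : w ≤ 1) (hxy : x ≤ y)
    (hf : f ≤ 1) : (1 - w) * x + w * f ≤ (1 - w) * y + w := by nlinarith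

end Aux

/-- Proposition 1: under variable capacity, matching capacity to demand
(full-fill dynamics) dominates any capacity sequence. -/
theorem variable_capacity_full_fill_optimal
    (Λ c p cA m u α w L H R1 q : ℝ) (N : ℕ)
    (hΛ : 0 < Λ) (hc : 0 < c) (hcp : c < p) (hcA : 0 ≤ cA)
    (hm : 0 < m) (hu : 0 ≤ u) (hqdef : q = (u + p) / m) (hq1 : q < 1)
    (hα : 0 < α) (hw0 : 0 ≤ w) (hw1 : w ≤ 1)
    (hL0 : 0 ≤ L) (hLH : L < H) (hH1 : H ≤ 1)
    (A : ℕ → ℝ) (hA : ∀ i, A i = L ∨ A i = H)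
    (hR10 : 0 ≤ R1) (hR11 : R1 ≤ 1)
    (S : ℕ → ℝ) (hS : ∀ i, 0 ≤ S i) :
    profitG α w Λ q p c cA A S R1 N ≤ profit α w Λ q p c cA A R1 N := by
  have hq0 : 0 ≤ q := by
    rw [hqdef]; apply div_nonneg <;> linarith
  have hA0 : ∀ i, 0 ≤ A i := fun i => by
    rcases hA i with h | h <;> rw [h] <;> linarith
  have hA1 : ∀ i, A i ≤ 1 := fun i => by
    rcases hA i with h | h <;> rw [h] <;> linarith
  -- key invariant
  have key : ∀ i, (0 ≤ repG α w Λ q A S R1 i ∧ repG α w Λ q A S R1 i ≤ 1) ∧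
      (0 ≤ rep α w Λ q A R1 i ∧ rep α w Λ q A R1 i ≤ 1) ∧
      repG α w Λ q A S R1 i ≤ rep α w Λ q A R1 i := by
    intro i
    induction i with
    | zero => exact ⟨⟨hR10, hR11⟩, ⟨hR10, hR11⟩, le_rfl⟩
    | succ i ih =>
      obtain ⟨⟨hG0, hG1⟩, ⟨hF0, hF1⟩, hGF⟩ := ih
      have hGstep' : repG α w Λ q A S R1 (i+1)
          = if 0 < dem Λ q (frep α (repG α w Λ q A S R1 i) (A i)) then
              (1 - w) * frep α (repG α w Λ q A S R1 i) (A i)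
                + w * (min (S i) (dem Λ q (frep α (repG α w Λ q A S R1 i) (A i)))
                       / dem Λ q (frep α (repG α w Λ q A S R1 i) (A i)))
            else frep α (repG α w Λ q A S R1 i) (A i) := by
        simp only [repG]
      have hFstep' : rep α w Λ q A R1 (i+1)
          = if 0 < dem Λ q (frep α (rep α w Λ q A R1 i) (A i)) then
              (1 - w) * frep α (rep α w Λ q A R1 i) (A i) + w
            else frep α (rep α w Λ q A R1 i) (A i) := by
        simp only [rep]
      obtain ⟨hRG'0, hRG'1⟩ := frep_mem hα hG0 hG1 (hA0 i) (hA1 i)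
      obtain ⟨hRF'0, hRF'1⟩ := frep_mem hα hF0 hF1 (hA0 i) (hA1 i)
      have hmono : frep α (repG α w Λ q A S R1 i) (A i)
          ≤ frep α (rep α w Λ q A R1 i) (A i) :=
        frep_mono hα (hA0 i) (hA1 i) hGF
      have hdmono : dem Λ q (frep α (repG α w Λ q A S R1 i) (A i))
          ≤ dem Λ q (frep α (rep α w Λ q A R1 i) (A i)) :=
        dem_mono Λ q hΛ.le hq0 hmono
      set RG' := frep α (repG α w Λ q A S R1 i) (A i) with hRG'
      set RF' := frep α (rep α w Λ q A R1 i) (A i) with hRF'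
      set dG := dem Λ q RG' with hdGdef
      set dF := dem Λ q RF' with hdFdef
      rw [hGstep', hFstep']
      by_cases hdG : 0 < dG
      · have hdF : 0 < dF := lt_of_lt_of_le hdG hdmono
        rw [if_pos hdG, if_pos hdF]
        have hfr0 : 0 ≤ min (S i) dG / dG := div_nonneg (le_min (hS i) hdG.le) hdG.le
        have hfr1 : min (S i) dG / dG ≤ 1 := by
          rw [div_le_one hdG]; exact min_le_right _ _
        exact ⟨combo_mem hw0 hw1 hRG'0 hRG'1 hfr0 hfr1,
          combo_mem1 hw0 hw1 hRF'0 hRF'1,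
          combo_mono hw0 hw1 hmono hfr1⟩
      · rw [if_neg hdG]
        by_cases hdF : 0 < dF
        · rw [if_pos hdF]
          exact ⟨⟨hRG'0, hRG'1⟩, combo_mem1 hw0 hw1 hRF'0 hRF'1, by nlinarith⟩
        · rw [if_neg hdF]
          exact ⟨⟨hRG'0, hRG'1⟩, ⟨hRF'0, hRF'1⟩, hmono⟩
  unfold profitG profit
  apply Finset.sum_le_sum
  intro i _
  obtain ⟨⟨hG0, hG1⟩, ⟨hF0, hF1⟩, hGF⟩ := key i
  set dG := dem Λ q (frep α (repG α w Λ q A S R1 i) (A i)) with hdG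
  set dF := dem Λ q (frep α (rep α w Λ q A R1 i) (A i)) with hdF
  have hdmono : dG ≤ dF :=
    dem_mono Λ q hΛ.le hq0 (frep_mono hα (hA0 i) (hA1 i) hGF)
  have h1 : min (S i) dG ≤ S i := min_le_left _ _
  have h2 : min (S i) dG ≤ dG := min_le_right _ _
  nlinarith [hS i, hA0 i]
end
end

section
/- Corollary 1 (variable capacity): The optimal total profit is a nondecreasing function of the starting reputation: if 0 ≤ R_1 ≤ R̂_1 ≤ 1, then max over all advertisement sequences A ∈ {L,H}^N of Π(A, R_1) is at most max over all advertisement sequences A ∈ {L,H}^N of Π(A, R̂_1). -/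
noncomputable section

set_option maxHeartbeats 1000000 in
/-- Corollary 1: the optimal full-fill total profit is nondecreasing in the
starting reputation (the maximum over advertisement sequences in `{L,H}` at
`R1` is at most that at `R̂1`). -/
theorem optimal_profit_monotone_in_initial_reputation
    (Λ c p cA m u α w L H q : ℝ) (N : ℕ)
    (hΛ : 0 < Λ) (hc : 0 < c) (hcp : c < p) (hcA : 0 ≤ cA)
    (hm : 0 < m) (hu : 0 ≤ u) (hqdef : q = (u + p) / m) (hq1 : q < 1)
    (hα : 0 < α) (hw0 : 0 ≤ w) (hw1 : w ≤ 1)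
    (hL0 : 0 ≤ L) (hLH : L < H) (hH1 : H ≤ 1)
    (R1 Rhat1 : ℝ) (hR10 : 0 ≤ R1) (hle : R1 ≤ Rhat1) (hRhat1 : Rhat1 ≤ 1) :
    ∀ A : ℕ → ℝ, (∀ i, A i = L ∨ A i = H) →
      ∃ B : ℕ → ℝ, (∀ i, B i = L ∨ B i = H) ∧
        profit α w Λ q p c cA A R1 N ≤ profit α w Λ q p c cA B Rhat1 N := by
  intro A hA
  refine ⟨A, hA, ?_⟩
  have hq0 : 0 < q := by
    have : 0 < u + p := by linarith
    rw [hqdef]; exact div_pos this hm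
  have dem_nonneg : ∀ x, 0 ≤ dem Λ q x := by
    intro x; unfold dem; split
    · exact le_max_left _ _
    · exact le_rfl
  have dem_mono : ∀ {x y : ℝ}, x ≤ y → dem Λ q x ≤ dem Λ q y := by
    intro x y hxy
    by_cases hx : 0 < x
    · have hy : 0 < y := lt_of_lt_of_le hx hxy
      simp only [dem, if_pos hx, if_pos hy]
      refine max_le_max le_rfl ?_
      have h1 : q / y ≤ q / x := div_le_div_of_nonneg_left hq0.le hx hxy
      nlinarith
    · simp only [dem, if_neg hx]
      exact dem_nonneg y
  have hA01 : ∀ i, 0 ≤ A i ∧ A i ≤ 1 := by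
    intro i; rcases hA i with h | h <;> constructor <;> rw [h] <;> linarith
  have ht : ∀ i, 0 ≤ A i ^ α ∧ A i ^ α ≤ 1 := fun i =>
    ⟨Real.rpow_nonneg (hA01 i).1 α, Real.rpow_le_one (hA01 i).1 (hA01 i).2 hα.le⟩
  have key : ∀ i, rep α w Λ q A R1 i ≤ rep α w Λ q A Rhat1 i ∧
      rep α w Λ q A Rhat1 i ≤ 1 := by
    intro i
    induction i with
    | zero => exact ⟨hle, hRhat1⟩
    | succ n ih =>
      obtain ⟨h1, h2⟩ := ih
      obtain ⟨ht0, ht1⟩ := ht n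
      set x := rep α w Λ q A R1 n with hxdef
      set y := rep α w Λ q A Rhat1 n with hydef
      have hf1 : frep α x (A n) ≤ frep α y (A n) := by
        simp only [frep]; nlinarith
      have hf2 : frep α y (A n) ≤ 1 := by
        simp only [frep]; nlinarith
      have e1 : rep α w Λ q A R1 (n + 1) =
          if 0 < dem Λ q (frep α x (A n)) then (1 - w) * frep α x (A n) + w
          else frep α x (A n) := rfl
      have e2 : rep α w Λ q A Rhat1 (n + 1) =
          if 0 < dem Λ q (frep α y (A n)) then (1 - w) * frep α y (A n) + w
          else frep α y (A n) := rfl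
      constructor
      · rw [e1, e2]
        by_cases hdx : 0 < dem Λ q (frep α x (A n))
        · have hdy : 0 < dem Λ q (frep α y (A n)) :=
            lt_of_lt_of_le hdx (dem_mono hf1)
          rw [if_pos hdx, if_pos hdy]; nlinarith
        · rw [if_neg hdx]
          by_cases hdy : 0 < dem Λ q (frep α y (A n))
          · rw [if_pos hdy]; nlinarith
          · rw [if_neg hdy]; exact hf1
      · rw [e2]
        split
        · nlinarith
        · exact hf2
  unfold profit
  refine Finset.sum_le_sum ?_
  intro i _
  obtain ⟨h1, _⟩ := key i
  obtain ⟨ht0, ht1⟩ := ht i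
  have hfm : frep α (rep α w Λ q A R1 i) (A i) ≤
      frep α (rep α w Λ q A Rhat1 i) (A i) := by
    simp only [frep]; nlinarith
  have hd := dem_mono hfm
  nlinarith
end
end

section
/- Two-period swap inequality: Let α > 0 and w ∈ [0,1], and define f(R,a) := R + (1−R)·a^α and g(x) := (1−w)·x + w. Then for all R, a, b ∈ [0,1]: f(g(f(R,a)), b) ≥ f(f(R,b), a). That is, advertising at level a and then receiving the full-fill WoM update before advertising at level b yields a post-advertisement reputation at least as large as advertising at level b and then at level a with no WoM update in between. -/
noncomputable section

/-- Full-fill WoM update with weight `w`. -/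
def wom (w x : ℝ) : ℝ := (1 - w) * x + w

/-- Two-period swap inequality: advertising at level `a`, receiving the
full-fill WoM update, then advertising at level `b` yields a post-advertisement
reputation at least as large as advertising at `b` then `a` with no WoM update
in between. -/
theorem two_period_swap_inequality (α w R a b : ℝ)
    (hα : 0 < α) (hw0 : 0 ≤ w) (hw1 : w ≤ 1)
    (hR0 : 0 ≤ R) (hR1 : R ≤ 1) (ha0 : 0 ≤ a) (ha1 : a ≤ 1)
    (hb0 : 0 ≤ b) (hb1 : b ≤ 1) :
    frep α (frep α R b) a ≤ frep α (wom w (frep α R a)) b := by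
  have hA0 : (0:ℝ) ≤ a ^ α := Real.rpow_nonneg ha0 α
  have hA1 : a ^ α ≤ 1 := Real.rpow_le_one ha0 ha1 hα.le
  have hB0 : (0:ℝ) ≤ b ^ α := Real.rpow_nonneg hb0 α
  have hB1 : b ^ α ≤ 1 := Real.rpow_le_one hb0 hb1 hα.le
  simp only [frep, wom]
  nlinarith [mul_nonneg hw0 (mul_nonneg (mul_nonneg (sub_nonneg.2 hR1) (sub_nonneg.2 hA1)) (sub_nonneg.2 hB1)), mul_nonneg (sub_nonneg.2 hR1) hA0]
end
end

section
/- Proposition 2 (single switching point for the aware firm under variable capacity): For every horizon N and initial reputation R_1 ∈ [0,1], there exists k with 0 ≤ k ≤ N such that the single-switch advertisement sequence A^k defined by A^k_i = H for i ≤ k and A^k_i = L for k < i ≤ N maximizes the full-fill total profit Π(·, R_1) over all advertisement sequences in {L,H}^N. In particular, the maximum is attained by a sequence in which no high-level advertisement ever follows a low-level advertisement. -/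
noncomputable section

namespace P2

/-- The full-fill update map. -/
def g (Λ q w x : ℝ) : ℝ := if 0 < dem Λ q x then (1 - w) * x + w else x

lemma rep_zero (α w Λ q : ℝ) (A : ℕ → ℝ) (R1 : ℝ) : rep α w Λ q A R1 0 = R1 := rfl

lemma rep_succ (α w Λ q : ℝ) (A : ℕ → ℝ) (R1 : ℝ) (i : ℕ) :
    rep α w Λ q A R1 (i + 1) = g Λ q w (frep α (rep α w Λ q A R1 i) (A i)) := rfl

lemma dem_nonneg (Λ q x : ℝ) : 0 ≤ dem Λ q x := by
  unfold dem; split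
  · exact le_max_left _ _
  · exact le_rfl

lemma dem_pos_iff {Λ q : ℝ} (hΛ : 0 < Λ) (hq : 0 < q) (x : ℝ) :
    0 < dem Λ q x ↔ q < x := by
  unfold dem
  split_ifs with h
  · rw [lt_max_iff]
    simp only [lt_irrefl, false_or]
    rw [mul_pos_iff_of_pos_left hΛ, sub_pos, div_lt_one h]
  · simp only [lt_irrefl, false_iff, not_lt]
    push_neg at h
    exact h.trans hq.le

lemma dem_mono {Λ q : ℝ} (hΛ : 0 < Λ) (hq : 0 < q) {x y : ℝ} (hxy : x ≤ y) :
    dem Λ q x ≤ dem Λ q y := by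
  unfold dem
  split_ifs with hx hy hy
  · apply max_le_max le_rfl
    have : q / y ≤ q / x := by gcongr
    nlinarith
  · exact absurd (hx.trans_le hxy) hy
  · exact le_max_left _ _
  · exact le_rfl

lemma frep_eq (α R a : ℝ) : frep α R a = R + (1 - R) * a ^ α := rfl

lemma frep_mem {α R a : ℝ} (hα : 0 ≤ α) (ha0 : 0 ≤ a) (ha1 : a ≤ 1)
    (hR0 : 0 ≤ R) (hR1 : R ≤ 1) : 0 ≤ frep α R a ∧ frep α R a ≤ 1 := by
  have h1 : 0 ≤ a ^ α := Real.rpow_nonneg ha0 α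
  have h2 : a ^ α ≤ 1 := Real.rpow_le_one ha0 ha1 hα
  unfold frep
  constructor <;> nlinarith

lemma frep_mono_R {α R S a : ℝ} (hα : 0 ≤ α) (ha0 : 0 ≤ a) (ha1 : a ≤ 1)
    (hRS : R ≤ S) : frep α R a ≤ frep α S a := by
  have h2 : a ^ α ≤ 1 := Real.rpow_le_one ha0 ha1 hα
  unfold frep; nlinarith

lemma frep_mono_a {α R a b : ℝ} (hα : 0 ≤ α) (ha0 : 0 ≤ a) (hab : a ≤ b)
    (hR1 : R ≤ 1) : frep α R a ≤ frep α R b := by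
  have : a ^ α ≤ b ^ α := Real.rpow_le_rpow ha0 hab hα
  unfold frep; nlinarith

lemma g_mem {Λ q w x : ℝ} (hw0 : 0 ≤ w) (hw1 : w ≤ 1) (hx0 : 0 ≤ x) (hx1 : x ≤ 1) :
    0 ≤ g Λ q w x ∧ g Λ q w x ≤ 1 := by
  unfold g; split_ifs
  · constructor <;> nlinarith
  · exact ⟨hx0, hx1⟩

lemma le_g {Λ q w x : ℝ} (hw0 : 0 ≤ w) (hx1 : x ≤ 1) : x ≤ g Λ q w x := by
  unfold g; split_ifs
  · nlinarith
  · exact le_rfl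

lemma g_mono {Λ q w : ℝ} (hΛ : 0 < Λ) (hq : 0 < q) (hw0 : 0 ≤ w) (hw1 : w ≤ 1)
    {x y : ℝ} (hxy : x ≤ y) (hy1 : y ≤ 1) : g Λ q w x ≤ g Λ q w y := by
  unfold g
  simp only [dem_pos_iff hΛ hq]
  split_ifs with h1 h2 h2
  · nlinarith
  · exact absurd (h1.trans_le hxy) h2
  · nlinarith
  · exact hxy


lemma rep_congr {α w Λ q : ℝ} {A B : ℕ → ℝ} {R1 : ℝ} :
    ∀ {n : ℕ}, (∀ i < n, A i = B i) → rep α w Λ q A R1 n = rep α w Λ q B R1 n := by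
  intro n
  induction n with
  | zero => intro _; rfl
  | succ n ih =>
    intro h
    rw [rep_succ, rep_succ, ih (fun i hi => h i (hi.trans (Nat.lt_succ_self n))),
      h n (Nat.lt_succ_self n)]

lemma rep_mem {α w Λ q : ℝ} {A : ℕ → ℝ} {R1 : ℝ}
    (hα : 0 ≤ α) (hw0 : 0 ≤ w) (hw1 : w ≤ 1)
    (hA : ∀ i, 0 ≤ A i ∧ A i ≤ 1) (hR0 : 0 ≤ R1) (hR1 : R1 ≤ 1) :
    ∀ n, 0 ≤ rep α w Λ q A R1 n ∧ rep α w Λ q A R1 n ≤ 1 := by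
  intro n
  induction n with
  | zero => exact ⟨hR0, hR1⟩
  | succ n ih =>
    rw [rep_succ]
    have hf := P2.frep_mem hα (hA n).1 (hA n).2 ih.1 ih.2
    exact P2.g_mem hw0 hw1 hf.1 hf.2

lemma rep_mono_R1 {α w Λ q : ℝ} {A : ℕ → ℝ} {R S : ℝ}
    (hΛ : 0 < Λ) (hq : 0 < q) (hα : 0 ≤ α) (hw0 : 0 ≤ w) (hw1 : w ≤ 1)
    (hA : ∀ i, 0 ≤ A i ∧ A i ≤ 1)
    (hR0 : 0 ≤ R) (hS1 : S ≤ 1) (hRS : R ≤ S) :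
    ∀ n, rep α w Λ q A R n ≤ rep α w Λ q A S n := by
  intro n
  induction n with
  | zero => exact hRS
  | succ n ih =>
    rw [rep_succ, rep_succ]
    have hSmem := rep_mem (Λ := Λ) (q := q) hα hw0 hw1 hA (hR0.trans hRS) hS1 n
    have h1 : frep α (rep α w Λ q A R n) (A n) ≤ frep α (rep α w Λ q A S n) (A n) :=
      P2.frep_mono_R hα (hA n).1 (hA n).2 ih
    have h2 := P2.frep_mem hα (hA n).1 (hA n).2 hSmem.1 hSmem.2
    exact P2.g_mono hΛ hq hw0 hw1 h1 h2.2

lemma rep_shift {α w Λ q : ℝ} {A : ℕ → ℝ} {R1 : ℝ} (m : ℕ) :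
    ∀ n, rep α w Λ q A R1 (m + n) =
      rep α w Λ q (fun i => A (m + i)) (rep α w Λ q A R1 m) n := by
  intro n
  induction n with
  | zero => rfl
  | succ n ih => rw [← Nat.add_assoc, rep_succ, rep_succ, ih]

/-- The core exchange inequality: doing the larger advertisement first yields a
weakly larger post-advertisement reputation two periods later. -/
lemma core {Λ q w : ℝ} (hΛ : 0 < Λ) (hq : 0 < q) (hw0 : 0 ≤ w) (hw1 : w ≤ 1)
    {R a b : ℝ} (hR0 : 0 ≤ R) (hR1 : R ≤ 1) (ha0 : 0 ≤ a) (hab : a ≤ b) (hb1 : b ≤ 1) :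
    P2.g Λ q w (R + (1 - R) * a) + (1 - P2.g Λ q w (R + (1 - R) * a)) * b ≤
    P2.g Λ q w (R + (1 - R) * b) + (1 - P2.g Λ q w (R + (1 - R) * b)) * a := by
  have hxy : R + (1 - R) * a ≤ R + (1 - R) * b := by nlinarith
  unfold P2.g
  simp only [P2.dem_pos_iff hΛ hq]
  split_ifs with h1 h2 h2
  · apply le_of_eq; ring
  · exact absurd (h1.trans_le hxy) h2
  · nlinarith [mul_nonneg (mul_nonneg (mul_nonneg hw0 (sub_nonneg.2 hR1))
      (sub_nonneg.2 (hab.trans hb1))) (sub_nonneg.2 hb1)]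
  · apply le_of_eq; ring

lemma sum_split {M : Type*} [AddCommMonoid M] (h : ℕ → M) {j N : ℕ} (hj : j + 1 < N) :
    ∑ i ∈ Finset.range N, h i =
      (∑ i ∈ Finset.range j, h i) + (h j + (h (j + 1) + ∑ i ∈ Finset.Ico (j + 2) N, h i)) := by
  have hjN : j ≤ N := by omega
  have h1 : j < N := by omega
  rw [Finset.range_eq_Ico, ← Finset.sum_Ico_consecutive h (Nat.zero_le j) hjN,
    Finset.sum_eq_sum_Ico_succ_bot h1 h, Finset.sum_eq_sum_Ico_succ_bot hj h]
  rw [Finset.range_eq_Ico]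

lemma sum_le_split {f g : ℕ → ℝ} {j N : ℕ} (hj : j + 1 < N)
    (h1 : ∀ i < j, f i = g i)
    (h2 : f j + f (j + 1) ≤ g j + g (j + 1))
    (h3 : ∀ i, j + 2 ≤ i → i < N → f i ≤ g i) :
    ∑ i ∈ Finset.range N, f i ≤ ∑ i ∈ Finset.range N, g i := by
  rw [sum_split f hj, sum_split g hj]
  have e1 : ∑ i ∈ Finset.range j, f i = ∑ i ∈ Finset.range j, g i :=
    Finset.sum_congr rfl fun i hi => h1 i (Finset.mem_range.1 hi)
  have e2 : ∑ i ∈ Finset.Ico (j + 2) N, f i ≤ ∑ i ∈ Finset.Ico (j + 2) N, g i :=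
    Finset.sum_le_sum fun i hi => h3 i (Finset.mem_Ico.1 hi).1 (Finset.mem_Ico.1 hi).2
  rw [e1]
  linarith


lemma swap_le {α w Λ q p c cA L H R1 : ℝ}
    (hΛ : 0 < Λ) (hq : 0 < q) (hpc : c ≤ p) (hcA : 0 ≤ cA)
    (hα : 0 ≤ α) (hw0 : 0 ≤ w) (hw1 : w ≤ 1)
    (hL0 : 0 ≤ L) (hLH : L ≤ H) (hH1 : H ≤ 1)
    (hR0 : 0 ≤ R1) (hR1 : R1 ≤ 1)
    {N j : ℕ} (hj : j + 1 < N)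
    (A : ℕ → ℝ) (hAj : A j = L) (hAj1 : A (j + 1) = H)
    (hAmem : ∀ i, 0 ≤ A i ∧ A i ≤ 1) :
    profit α w Λ q p c cA A R1 N ≤
      profit α w Λ q p c cA
        (fun i => if i = j then H else if i = j + 1 then L else A i) R1 N := by
  set B : ℕ → ℝ := fun i => if i = j then H else if i = j + 1 then L else A i with hB
  have hABne : ∀ t, t ≠ j → t ≠ j + 1 → A t = B t := by
    intro t h1 h2
    simp only [hB, if_neg h1, if_neg h2]
  have hBj : B j = H := by simp [hB]
  have hBj1 : B (j + 1) = L := by simp [hB]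
  have hBmem : ∀ i, 0 ≤ B i ∧ B i ≤ 1 := by
    intro i
    simp only [hB]
    split_ifs with h1 h2
    · exact ⟨hL0.trans hLH, hH1⟩
    · exact ⟨hL0, hLH.trans hH1⟩
    · exact hAmem i
  have hH0 : 0 ≤ H := hL0.trans hLH
  have hL1 : L ≤ 1 := hLH.trans hH1
  set R := rep α w Λ q A R1 j with hR
  have hRmem : 0 ≤ R ∧ R ≤ 1 := rep_mem hα hw0 hw1 hAmem hR0 hR1 j
  have hrepj : ∀ i ≤ j, rep α w Λ q A R1 i = rep α w Λ q B R1 i := by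
    intro i hi
    exact rep_congr (fun t ht => hABne t (by omega) (by omega))
  -- the core comparison
  have key : frep α (P2.g Λ q w (frep α R L)) H ≤ frep α (P2.g Λ q w (frep α R H)) L := by
    have := core hΛ hq hw0 hw1 hRmem.1 hRmem.2 (Real.rpow_nonneg hL0 α)
      (Real.rpow_le_rpow hL0 hLH hα) (Real.rpow_le_one hH0 hH1 hα)
    simpa only [frep_eq] using this
  have hj2 : (j : ℕ) + 2 = (j + 1) + 1 := rfl
  have repAj1 : rep α w Λ q A R1 (j + 1) = P2.g Λ q w (frep α R L) := by
    rw [rep_succ, hAj, hR]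
  have repAj2 : rep α w Λ q A R1 (j + 2) =
      P2.g Λ q w (frep α (P2.g Λ q w (frep α R L)) H) := by
    rw [hj2, rep_succ, repAj1, hAj1]
  have repBj : rep α w Λ q B R1 j = R := (hrepj j le_rfl).symm
  have repBj1 : rep α w Λ q B R1 (j + 1) = P2.g Λ q w (frep α R H) := by
    rw [rep_succ, hBj, repBj]
  have repBj2 : rep α w Λ q B R1 (j + 2) =
      P2.g Λ q w (frep α (P2.g Λ q w (frep α R H)) L) := by
    rw [hj2, rep_succ, repBj1, hBj1]
  -- membership facts
  have m1 := P2.frep_mem hα hH0 hH1 hRmem.1 hRmem.2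
  have m2 := P2.g_mem (Λ := Λ) (q := q) hw0 hw1 m1.1 m1.2
  have m3 := P2.frep_mem hα hL0 hL1 m2.1 m2.2
  have hXY : rep α w Λ q A R1 (j + 2) ≤ rep α w Λ q B R1 (j + 2) := by
    rw [repAj2, repBj2]
    exact P2.g_mono hΛ hq hw0 hw1 key m3.2
  have hXmem := rep_mem (Λ := Λ) (q := q) hα hw0 hw1 hAmem hR0 hR1 (j + 2)
  have hYmem := rep_mem (Λ := Λ) (q := q) hα hw0 hw1 hBmem hR0 hR1 (j + 2)
  -- reputation comparison for all later periods
  have hrep_le : ∀ i, j + 2 ≤ i → rep α w Λ q A R1 i ≤ rep α w Λ q B R1 i := by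
    intro i hi
    obtain ⟨t, rfl⟩ : ∃ t, i = (j + 2) + t := ⟨i - (j + 2), by omega⟩
    rw [rep_shift (j + 2), rep_shift (j + 2)]
    have step1 : rep α w Λ q (fun s => A (j + 2 + s)) (rep α w Λ q A R1 (j + 2)) t ≤
        rep α w Λ q (fun s => A (j + 2 + s)) (rep α w Λ q B R1 (j + 2)) t :=
      rep_mono_R1 hΛ hq hα hw0 hw1 (fun s => hAmem (j + 2 + s)) hXmem.1 hYmem.2 hXY t
    have step2 : rep α w Λ q (fun s => A (j + 2 + s)) (rep α w Λ q B R1 (j + 2)) t =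
        rep α w Λ q (fun s => B (j + 2 + s)) (rep α w Λ q B R1 (j + 2)) t :=
      rep_congr (fun s _ => hABne (j + 2 + s) (by omega) (by omega))
    rw [step2] at step1
    exact step1
  -- now compare profits termwise / pairwise
  unfold profit
  apply sum_le_split hj
  · intro i hi
    rw [hrepj i hi.le, hABne i (by omega) (by omega)]
  · rw [hAj, hAj1, hBj, hBj1, repAj1, repBj1, repBj, ← hR]
    have d1 : dem Λ q (frep α R L) ≤ dem Λ q (frep α R H) :=
      dem_mono hΛ hq (P2.frep_mono_a hα hL0 hLH hRmem.2)
    have d2 : dem Λ q (frep α (P2.g Λ q w (frep α R L)) H) ≤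
        dem Λ q (frep α (P2.g Λ q w (frep α R H)) L) := dem_mono hΛ hq key
    nlinarith [d1, d2]
  · intro i hi2 hiN
    rw [← hABne i (by omega) (by omega)]
    have : dem Λ q (frep α (rep α w Λ q A R1 i) (A i)) ≤
        dem Λ q (frep α (rep α w Λ q B R1 i) (A i)) :=
      dem_mono hΛ hq (P2.frep_mono_R hα (hAmem i).1 (hAmem i).2 (hrep_le i hi2))
    nlinarith [this]


lemma profit_congr {α w Λ q p c cA R1 : ℝ} {A B : ℕ → ℝ} {N : ℕ}
    (h : ∀ i < N, A i = B i) :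
    profit α w Λ q p c cA A R1 N = profit α w Λ q p c cA B R1 N := by
  unfold profit
  refine Finset.sum_congr rfl fun i hi => ?_
  have hi' := Finset.mem_range.1 hi
  rw [rep_congr (fun t ht => h t (ht.trans hi')), h i hi']

/-- Sum of indices (shifted by nothing) of `H`-periods: the bubble-sort measure. -/
def msr (N : ℕ) (L H : ℝ) (A : ℕ → ℝ) : ℕ :=
  ∑ i ∈ Finset.range N, (if A i = H then i else 0)

lemma msr_lt {L H : ℝ} (hne : L ≠ H) {N j : ℕ} (hj : j + 1 < N) {A : ℕ → ℝ}
    (hAj : A j = L) (hAj1 : A (j + 1) = H) :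
    msr N L H (fun i => if i = j then H else if i = j + 1 then L else A i) < msr N L H A := by
  classical
  set B : ℕ → ℝ := fun i => if i = j then H else if i = j + 1 then L else A i with hB
  unfold msr
  rw [sum_split (fun i => if B i = H then i else 0) hj,
      sum_split (fun i => if A i = H then i else 0) hj]
  have e1 : ∑ i ∈ Finset.range j, (if B i = H then i else 0) =
      ∑ i ∈ Finset.range j, (if A i = H then i else 0) := by
    refine Finset.sum_congr rfl fun i hi => ?_
    have := Finset.mem_range.1 hi
    simp only [hB]
    rw [if_neg (show ¬(i = j) by omega), if_neg (show ¬(i = j + 1) by omega)]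
  have e2 : ∑ i ∈ Finset.Ico (j + 2) N, (if B i = H then i else 0) =
      ∑ i ∈ Finset.Ico (j + 2) N, (if A i = H then i else 0) := by
    refine Finset.sum_congr rfl fun i hi => ?_
    have := (Finset.mem_Ico.1 hi).1
    simp only [hB]
    rw [if_neg (show ¬(i = j) by omega), if_neg (show ¬(i = j + 1) by omega)]
  have hBj : B j = H := by simp [hB]
  have hBj1 : B (j + 1) = L := by simp [hB]
  rw [e1, e2, hBj, hBj1, hAj, hAj1]
  simp [hne]

lemma sorted_switch {L H : ℝ} (hne : L ≠ H) {N : ℕ} {A : ℕ → ℝ}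
    (hA : ∀ i, A i = L ∨ A i = H)
    (hs : ∀ j, j + 1 < N → ¬(A j = L ∧ A (j + 1) = H)) :
    ∃ k ≤ N, ∀ i < N, A i = (if i < k then H else L) := by
  classical
  have pre : ∀ d i, i + d < N → A (i + d) = H → A i = H := by
    intro d
    induction d with
    | zero => exact fun i _ h2 => h2
    | succ d ih =>
      intro i h1 h2
      have h2' : A ((i + d) + 1) = H := by
        have : i + (d + 1) = (i + d) + 1 := by omega
        rwa [this] at h2
      have hAd : A (i + d) = H := by
        rcases hA (i + d) with h | h
        · exact absurd ⟨h, h2'⟩ (hs (i + d) (by omega))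
        · exact h
      exact ih i (by omega) hAd
  by_cases hex : ∃ i, i < N ∧ A i = L
  · set k := Nat.find hex with hkdef
    have hk := Nat.find_spec hex
    refine ⟨k, hk.1.le, ?_⟩
    intro i hi
    by_cases hik : i < k
    · rw [if_pos hik]
      have hmin := Nat.find_min hex hik
      rcases hA i with h | h
      · exact absurd ⟨by omega, h⟩ hmin
      · exact h
    · rw [if_neg hik]
      rcases hA i with h | h
      · exact h
      · have hkH : A k = H := by
          have heq : k + (i - k) = i := by omega
          exact pre (i - k) k (by omega) (by rwa [heq])
        exact absurd (hk.2.symm.trans hkH) hne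
  · push_neg at hex
    refine ⟨N, le_rfl, fun i hi => ?_⟩
    rw [if_pos hi]
    rcases hA i with h | h
    · exact absurd h (hex i hi)
    · exact h

lemma exists_switch {α w Λ q p c cA L H R1 : ℝ}
    (hΛ : 0 < Λ) (hq : 0 < q) (hpc : c ≤ p) (hcA : 0 ≤ cA)
    (hα : 0 ≤ α) (hw0 : 0 ≤ w) (hw1 : w ≤ 1)
    (hL0 : 0 ≤ L) (hLH : L < H) (hH1 : H ≤ 1)
    (hR0 : 0 ≤ R1) (hR1 : R1 ≤ 1) (N : ℕ) :
    ∀ μ : ℕ, ∀ A : ℕ → ℝ, msr N L H A = μ → (∀ i, A i = L ∨ A i = H) →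
      ∃ k ≤ N, profit α w Λ q p c cA A R1 N ≤
        profit α w Λ q p c cA (fun i => if i < k then H else L) R1 N := by
  have hne : L ≠ H := ne_of_lt hLH
  intro μ
  induction μ using Nat.strong_induction_on with
  | _ μ IH =>
    intro A hμ hA
    by_cases hsw : ∃ j, j + 1 < N ∧ A j = L ∧ A (j + 1) = H
    · obtain ⟨j, hj, hAj, hAj1⟩ := hsw
      set B : ℕ → ℝ := fun i => if i = j then H else if i = j + 1 then L else A i with hB
      have hBA : ∀ i, B i = L ∨ B i = H := by
        intro i
        simp only [hB]
        split_ifs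
        exacts [Or.inr rfl, Or.inl rfl, hA i]
      have hmem : ∀ i, 0 ≤ A i ∧ A i ≤ 1 := fun i => by
        rcases hA i with h | h <;> rw [h] <;> exact ⟨by linarith, by linarith⟩
      have hlt : msr N L H B < μ := hμ ▸ msr_lt hne hj hAj hAj1
      obtain ⟨k, hk, hkle⟩ := IH (msr N L H B) hlt B rfl hBA
      exact ⟨k, hk, (swap_le hΛ hq hpc hcA hα hw0 hw1 hL0 hLH.le hH1 hR0 hR1 hj A
        hAj hAj1 hmem).trans hkle⟩
    · push_neg at hsw
      obtain ⟨k, hk, hrepr⟩ := sorted_switch hne hA (fun j hj hand => hsw j hj hand.1 hand.2)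
      exact ⟨k, hk, le_of_eq (profit_congr hrepr)⟩

end P2

/-- Proposition 2: under variable capacity the aware firm has an optimal
advertisement sequence with a single switching point: `H` in the first `k`
periods and `L` afterwards, for some `0 ≤ k ≤ N`. -/
theorem single_switching_point_variable_capacity
    (Λ c p cA m u α w L H q : ℝ) (N : ℕ)
    (hΛ : 0 < Λ) (hc : 0 < c) (hcp : c < p) (hcA : 0 ≤ cA)
    (hm : 0 < m) (hu : 0 ≤ u) (hqdef : q = (u + p) / m) (hq1 : q < 1)
    (hα : 0 < α) (hw0 : 0 ≤ w) (hw1 : w ≤ 1)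
    (hL0 : 0 ≤ L) (hLH : L < H) (hH1 : H ≤ 1)
    (R1 : ℝ) (hR10 : 0 ≤ R1) (hR11 : R1 ≤ 1) :
    ∃ k ≤ N, ∀ A : ℕ → ℝ, (∀ i, A i = L ∨ A i = H) →
      profit α w Λ q p c cA A R1 N ≤
        profit α w Λ q p c cA (fun i => if i < k then H else L) R1 N := by
  have hq0 : 0 < q := by
    rw [hqdef]
    exact div_pos (by linarith) hm
  obtain ⟨k, hkmem, hmax⟩ := Finset.exists_max_image (Finset.range (N + 1))
    (fun k => profit α w Λ q p c cA (fun i => if i < k then H else L) R1 N)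
    ⟨0, Finset.mem_range.2 (Nat.succ_pos N)⟩
  refine ⟨k, Nat.lt_succ_iff.1 (Finset.mem_range.1 hkmem), ?_⟩
  intro A hA
  obtain ⟨k', hk', hle⟩ := P2.exists_switch hΛ hq0 hcp.le hcA hα.le hw0 hw1 hL0 hLH hH1
    hR10 hR11 N (P2.msr N L H A) A rfl hA
  exact hle.trans (hmax k' (Finset.mem_range.2 (by omega)))
end
end

section
/- Proposition 3 (naive firm never advertises more than the aware firm under variable capacity): Fix a horizon N and initial reputation R_1 ∈ [0,1]. Let A^n be the naive (myopic) advertisement sequence defined recursively along the full-fill trajectory by: A^n_i = H if (p−c)·D(f(R^n_i, H)) − c_A·H > (p−c)·D(f(R^n_i, L)) − c_A·L, and A^n_i = L otherwise, where R^n_1 = R_1 and R^n evolves by the full-fill dynamics under A^n. Then there exists an advertisement sequence A* ∈ {L,H}^N maximizing the full-fill total profit Π(·, R_1) such that the number of periods i with A*_i = H is at least the number of periods i with A^n_i = H. -/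
set_option maxHeartbeats 1000000


noncomputable section

/-- The naive (myopic) firm's advertisement decision at reputation `R`:
high level iff it yields strictly larger single-period profit. -/
def naiveAd (α Λ q p c cA L H : ℝ) (R : ℝ) : ℝ :=
  if (p - c) * dem Λ q (frep α R L) - cA * L <
      (p - c) * dem Λ q (frep α R H) - cA * H then H else L

/-- The naive firm's reputation trajectory under full-fill dynamics. -/
def naiveRep (α w Λ q p c cA L H R1 : ℝ) : ℕ → ℝ
  | 0 => R1
  | i + 1 =>
      let R := naiveRep α w Λ q p c cA L H R1 i
      let R' := frep α R (naiveAd α Λ q p c cA L H R)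
      if 0 < dem Λ q R' then (1 - w) * R' + w else R'

/-- Context bundling the model parameters and standing hypotheses. -/
structure NVCtx where
  Λ : ℝ
  c : ℝ
  p : ℝ
  cA : ℝ
  α : ℝ
  w : ℝ
  L : ℝ
  H : ℝ
  q : ℝ
  hΛ : 0 < Λ
  hpc : c < p
  hq0 : 0 < q
  hα : 0 < α
  hw0 : 0 ≤ w
  hw1 : w ≤ 1
  hL0 : 0 ≤ L
  hLH : L < H
  hH1 : H ≤ 1

namespace NVCtx

variable (C : NVCtx)

/-- demand as a function of post-ad reputation. -/
def dem' (x : ℝ) : ℝ := dem C.Λ C.q x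

/-- post-ad reputation. -/
def f' (R a : ℝ) : ℝ := frep C.α R a

/-- end-of-period reputation update. -/
def Tmap (z : ℝ) : ℝ := if 0 < C.dem' z then (1 - C.w) * z + C.w else z

/-- one-period reputation transition under action `a`. -/
def dstep (a R : ℝ) : ℝ := C.Tmap (C.f' R a)

/-- per-period profit. -/
def pper (R a : ℝ) : ℝ := (C.p - C.c) * C.dem' (C.f' R a) - C.cA * a

/-- myopic gain of H over L. -/
def gainf (R : ℝ) : ℝ := C.pper R C.H - C.pper R C.L

/-- the naive action. -/
def nAd (R : ℝ) : ℝ := naiveAd C.α C.Λ C.q C.p C.c C.cA C.L C.H R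

/-- naive one-period transition. -/
def nstep (R : ℝ) : ℝ := C.dstep (C.nAd R) R

end NVCtx

/-- number of H-picks of the naive firm over horizon `N` starting at `R`. -/
def NVCtx.ncnt (C : NVCtx) : ℕ → ℝ → ℕ
  | 0, _ => 0
  | N + 1, R => (if C.nAd R = C.H then 1 else 0) + NVCtx.ncnt C N (C.nstep R)

namespace NVCtx

variable (C : NVCtx)

lemma ncnt_succ (N : ℕ) (R : ℝ) :
    C.ncnt (N + 1) R = (if C.nAd R = C.H then 1 else 0) + C.ncnt N (C.nstep R) := by
  rw [ncnt]

/- ---------------- basic facts ---------------- -/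

lemma hK : (0:ℝ) < C.p - C.c := sub_pos.2 C.hpc
lemma hH0 : (0:ℝ) ≤ C.H := C.hL0.trans C.hLH.le
lemma expL_nonneg : 0 ≤ C.L ^ C.α := Real.rpow_nonneg C.hL0 _
lemma expH_nonneg : 0 ≤ C.H ^ C.α := Real.rpow_nonneg C.hH0 _
lemma expLH : C.L ^ C.α ≤ C.H ^ C.α := Real.rpow_le_rpow C.hL0 C.hLH.le C.hα.le
lemma expH_le_one : C.H ^ C.α ≤ 1 := Real.rpow_le_one C.hH0 C.hH1 C.hα.le
lemma expL_le_one : C.L ^ C.α ≤ 1 := C.expLH.trans C.expH_le_one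

lemma dem'_nonneg (x : ℝ) : 0 ≤ C.dem' x := by
  unfold dem' dem
  split
  · exact le_max_left _ _
  · exact le_rfl

lemma dem'_mono {x y : ℝ} (hx : 0 ≤ x) (hxy : x ≤ y) : C.dem' x ≤ C.dem' y := by
  unfold dem' dem
  by_cases h1 : 0 < x
  · have h2 : 0 < y := lt_of_lt_of_le h1 hxy
    rw [if_pos h1, if_pos h2]
    refine max_le_max le_rfl ?_
    have : C.q / y ≤ C.q / x := div_le_div_of_nonneg_left C.hq0.le h1 hxy
    have hΛ := C.hΛ.le
    nlinarith
  · rw [if_neg h1]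
    split
    · exact le_max_left _ _
    · exact le_rfl

lemma dem'_pos_iff {x : ℝ} : 0 < C.dem' x ↔ C.q < x := by
  unfold dem' dem
  constructor
  · intro h
    by_cases h1 : 0 < x
    · rw [if_pos h1] at h
      have ht : 0 < C.Λ * (1 - C.q / x) := by
        rcases lt_max_iff.1 h with h' | h'
        · exact absurd h' (lt_irrefl _)
        · exact h'
      have h2 : 0 < 1 - C.q / x := by
        by_contra hcon
        push_neg at hcon
        nlinarith [C.hΛ]
      have : C.q / x < 1 := by linarith
      exact (div_lt_one h1).1 this
    · rw [if_neg h1] at h; exact absurd h (lt_irrefl _)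
  · intro h
    have h1 : 0 < x := C.hq0.trans h
    rw [if_pos h1]
    have h2 : C.q / x < 1 := (div_lt_one h1).2 h
    have ht : 0 < C.Λ * (1 - C.q / x) := mul_pos C.hΛ (by linarith)
    exact lt_max_iff.2 (Or.inr ht)

lemma dem'_eq_of_lt {x : ℝ} (h : C.q < x) : C.dem' x = C.Λ * (1 - C.q / x) := by
  have h1 : 0 < x := C.hq0.trans h
  have h2 : C.q / x < 1 := (div_lt_one h1).2 h
  have ht : 0 ≤ C.Λ * (1 - C.q / x) := mul_nonneg C.hΛ.le (by linarith)
  unfold dem' dem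
  rw [if_pos h1, max_eq_right ht]

/- ---------------- frep facts ---------------- -/

lemma f'_ge {R a : ℝ} (hR1 : R ≤ 1) (ha : 0 ≤ a) : R ≤ C.f' R a := by
  unfold f' frep
  nlinarith [Real.rpow_nonneg ha C.α]

lemma f'_le_one {R a : ℝ} (hR1 : R ≤ 1) (ha1 : a ^ C.α ≤ 1) : C.f' R a ≤ 1 := by
  unfold f' frep; nlinarith

lemma f'_nonneg {R a : ℝ} (h0 : 0 ≤ R) (hR1 : R ≤ 1) (ha : 0 ≤ a) : 0 ≤ C.f' R a :=
  h0.trans (C.f'_ge hR1 ha)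

lemma f'_mono_R {R R' a : ℝ} (h : R ≤ R') (ha1 : a ^ C.α ≤ 1) : C.f' R a ≤ C.f' R' a := by
  unfold f' frep; nlinarith

lemma f'_mono_a {R a b : ℝ} (hR1 : R ≤ 1) (hab : a ^ C.α ≤ b ^ C.α) :
    C.f' R a ≤ C.f' R b := by
  unfold f' frep; nlinarith

/- ---------------- Tmap facts ---------------- -/

lemma Tmap_ge {z : ℝ} (hz1 : z ≤ 1) : z ≤ C.Tmap z := by
  unfold Tmap
  split
  · nlinarith [C.hw0]
  · exact le_rfl

lemma Tmap_le_one {z : ℝ} (hz1 : z ≤ 1) : C.Tmap z ≤ 1 := by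
  unfold Tmap
  split
  · nlinarith [C.hw1]
  · exact hz1

lemma Tmap_nonneg {z : ℝ} (h0 : 0 ≤ z) : 0 ≤ C.Tmap z := by
  unfold Tmap
  split
  · nlinarith [C.hw0, C.hw1]
  · exact h0

lemma Tmap_mono {z z' : ℝ} (h0 : 0 ≤ z) (h1 : z' ≤ 1) (h : z ≤ z') :
    C.Tmap z ≤ C.Tmap z' := by
  unfold Tmap
  by_cases hz : 0 < C.dem' z
  · have hz' : 0 < C.dem' z' := lt_of_lt_of_le hz (C.dem'_mono h0 h)
    rw [if_pos hz, if_pos hz']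
    nlinarith [C.hw1]
  · rw [if_neg hz]
    split
    · nlinarith [C.hw0]
    · exact h

/- ---------------- dstep facts ---------------- -/

lemma dstep_ge {R a : ℝ} (hR1 : R ≤ 1) (ha : 0 ≤ a) (ha1 : a ^ C.α ≤ 1) :
    R ≤ C.dstep a R :=
  (C.f'_ge hR1 ha).trans (C.Tmap_ge (C.f'_le_one hR1 ha1))

lemma dstep_le_one {R a : ℝ} (hR1 : R ≤ 1) (ha1 : a ^ C.α ≤ 1) : C.dstep a R ≤ 1 :=
  C.Tmap_le_one (C.f'_le_one hR1 ha1)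

lemma dstep_nonneg {R a : ℝ} (h0 : 0 ≤ R) (hR1 : R ≤ 1) (ha : 0 ≤ a) :
    0 ≤ C.dstep a R :=
  C.Tmap_nonneg (C.f'_nonneg h0 hR1 ha)

lemma dstep_mono_R {R R' a : ℝ} (h0 : 0 ≤ R) (hR1 : R' ≤ 1) (h : R ≤ R')
    (ha : 0 ≤ a) (ha1 : a ^ C.α ≤ 1) : C.dstep a R ≤ C.dstep a R' :=
  C.Tmap_mono (C.f'_nonneg h0 (h.trans hR1) ha) (C.f'_le_one hR1 ha1)
    (C.f'_mono_R h ha1)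

lemma dstep_mono_a {R a b : ℝ} (h0 : 0 ≤ R) (hR1 : R ≤ 1) (ha : 0 ≤ a)
    (hab : a ^ C.α ≤ b ^ C.α) (hb1 : b ^ C.α ≤ 1) : C.dstep a R ≤ C.dstep b R :=
  C.Tmap_mono (C.f'_nonneg h0 hR1 ha) (C.f'_le_one hR1 hb1) (C.f'_mono_a hR1 hab)

lemma dstepL_ge {R : ℝ} (hR1 : R ≤ 1) : R ≤ C.dstep C.L R :=
  C.dstep_ge hR1 C.hL0 C.expL_le_one
lemma dstepH_ge {R : ℝ} (hR1 : R ≤ 1) : R ≤ C.dstep C.H R :=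
  C.dstep_ge hR1 C.hH0 C.expH_le_one
lemma dstepL_le_one {R : ℝ} (hR1 : R ≤ 1) : C.dstep C.L R ≤ 1 :=
  C.dstep_le_one hR1 C.expL_le_one
lemma dstepH_le_one {R : ℝ} (hR1 : R ≤ 1) : C.dstep C.H R ≤ 1 :=
  C.dstep_le_one hR1 C.expH_le_one
lemma dstepL_nonneg {R : ℝ} (h0 : 0 ≤ R) (hR1 : R ≤ 1) : 0 ≤ C.dstep C.L R :=
  C.dstep_nonneg h0 hR1 C.hL0
lemma dstepH_nonneg {R : ℝ} (h0 : 0 ≤ R) (hR1 : R ≤ 1) : 0 ≤ C.dstep C.H R :=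
  C.dstep_nonneg h0 hR1 C.hH0
lemma dstepLH {R : ℝ} (h0 : 0 ≤ R) (hR1 : R ≤ 1) : C.dstep C.L R ≤ C.dstep C.H R :=
  C.dstep_mono_a h0 hR1 C.hL0 C.expLH C.expH_le_one
lemma dstepL_mono {R R' : ℝ} (h0 : 0 ≤ R) (hR1 : R' ≤ 1) (h : R ≤ R') :
    C.dstep C.L R ≤ C.dstep C.L R' := C.dstep_mono_R h0 hR1 h C.hL0 C.expL_le_one
lemma dstepH_mono {R R' : ℝ} (h0 : 0 ≤ R) (hR1 : R' ≤ 1) (h : R ≤ R') :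
    C.dstep C.H R ≤ C.dstep C.H R' := C.dstep_mono_R h0 hR1 h C.hH0 C.expH_le_one

/- ---------------- naive action facts ---------------- -/

lemma nAd_eq_H_iff {R : ℝ} : C.nAd R = C.H ↔ 0 < C.gainf R := by
  unfold nAd naiveAd
  split
  · rename_i h
    exact iff_of_true rfl (sub_pos.2 h)
  · rename_i h
    exact iff_of_false (ne_of_lt C.hLH) (fun hz => h (sub_pos.1 hz))

lemma nAd_eq_L {R : ℝ} (h : ¬ 0 < C.gainf R) : C.nAd R = C.L := by
  unfold nAd naiveAd
  split
  · rename_i h'; exact absurd (sub_pos.2 h') h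
  · rfl

lemma ncnt_succ_pos {R : ℝ} {N : ℕ} (h : 0 < C.gainf R) :
    C.ncnt (N + 1) R = 1 + C.ncnt N (C.dstep C.H R) := by
  have hH := C.nAd_eq_H_iff.2 h
  rw [C.ncnt_succ, if_pos hH]
  unfold nstep
  rw [hH]

lemma ncnt_succ_nonpos {R : ℝ} {N : ℕ} (h : ¬ 0 < C.gainf R) :
    C.ncnt (N + 1) R = C.ncnt N (C.dstep C.L R) := by
  have hL := C.nAd_eq_L h
  rw [C.ncnt_succ, if_neg (by rw [hL]; exact ne_of_lt C.hLH)]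
  unfold nstep
  rw [hL, Nat.zero_add]

lemma ncnt_le_succ : ∀ (N : ℕ) (R : ℝ), C.ncnt N R ≤ C.ncnt (N + 1) R := by
  intro N
  induction N with
  | zero => intro R; exact Nat.zero_le _
  | succ N ih =>
      intro R
      rw [C.ncnt_succ N R, C.ncnt_succ (N + 1) R]
      exact Nat.add_le_add_left (ih _) _

lemma nstep_nonneg {R : ℝ} (h0 : 0 ≤ R) (hR1 : R ≤ 1) : 0 ≤ C.nstep R := by
  unfold nstep
  by_cases h : 0 < C.gainf R
  · rw [C.nAd_eq_H_iff.2 h]; exact C.dstepH_nonneg h0 hR1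
  · rw [C.nAd_eq_L h]; exact C.dstepL_nonneg h0 hR1

lemma nstep_le_one {R : ℝ} (hR1 : R ≤ 1) : C.nstep R ≤ 1 := by
  unfold nstep
  by_cases h : 0 < C.gainf R
  · rw [C.nAd_eq_H_iff.2 h]; exact C.dstepH_le_one hR1
  · rw [C.nAd_eq_L h]; exact C.dstepL_le_one hR1

/- ---------------- the interval property of the gain ---------------- -/

lemma gain_between {X Y Z : ℝ} (hX0 : 0 ≤ X) (hZ1 : Z ≤ 1) (hXY : X ≤ Y) (hYZ : Y ≤ Z)
    (hgX : 0 < C.gainf X) (hgZ : 0 < C.gainf Z) : 0 < C.gainf Y := by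
  have hY1 : Y ≤ 1 := hYZ.trans hZ1
  have hY0 : 0 ≤ Y := hX0.trans hXY
  have hZ0 : 0 ≤ Z := hY0.trans hYZ
  have hX1 : X ≤ 1 := hXY.trans hY1
  by_cases hd : 0 < C.dem' (C.f' Y C.L)
  · -- both demands positive at Y and beyond: gain decreasing from Y to Z
    have hqLY : C.q < C.f' Y C.L := C.dem'_pos_iff.1 hd
    have hq0 := C.hq0
    have hLHY : C.f' Y C.L ≤ C.f' Y C.H := C.f'_mono_a hY1 C.expLH
    have hLYZ : C.f' Y C.L ≤ C.f' Z C.L := C.f'_mono_R hYZ C.expL_le_one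
    have hHYZ : C.f' Y C.H ≤ C.f' Z C.H := C.f'_mono_R hYZ C.expH_le_one
    have hqHY : C.q < C.f' Y C.H := lt_of_lt_of_le hqLY hLHY
    have hqLZ : C.q < C.f' Z C.L := lt_of_lt_of_le hqLY hLYZ
    have hLHZ : C.f' Z C.L ≤ C.f' Z C.H := C.f'_mono_a hZ1 C.expLH
    have hqHZ : C.q < C.f' Z C.H := lt_of_lt_of_le hqLZ hLHZ
    have pLY : 0 < C.f' Y C.L := hq0.trans hqLY
    have pHY : 0 < C.f' Y C.H := hq0.trans hqHY
    have pLZ : 0 < C.f' Z C.L := hq0.trans hqLZ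
    have pHZ : 0 < C.f' Z C.H := hq0.trans hqHZ
    have eY : C.gainf Y = (C.p - C.c) * (C.Λ * (1 - C.q / C.f' Y C.H)) - C.cA * C.H -
        ((C.p - C.c) * (C.Λ * (1 - C.q / C.f' Y C.L)) - C.cA * C.L) := by
      unfold gainf pper
      rw [C.dem'_eq_of_lt hqHY, C.dem'_eq_of_lt hqLY]
    have eZ : C.gainf Z = (C.p - C.c) * (C.Λ * (1 - C.q / C.f' Z C.H)) - C.cA * C.H -
        ((C.p - C.c) * (C.Λ * (1 - C.q / C.f' Z C.L)) - C.cA * C.L) := by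
      unfold gainf pper
      rw [C.dem'_eq_of_lt hqHZ, C.dem'_eq_of_lt hqLZ]
    -- key: 1/xLZ - 1/xHZ ≤ 1/xLY - 1/xHY
    have hDiffY : C.f' Y C.H - C.f' Y C.L = (1 - Y) * (C.H ^ C.α - C.L ^ C.α) := by
      unfold f' frep; ring
    have hDiffZ : C.f' Z C.H - C.f' Z C.L = (1 - Z) * (C.H ^ C.α - C.L ^ C.α) := by
      unfold f' frep; ring
    have eFracY : 1 / C.f' Y C.L - 1 / C.f' Y C.H
        = (1 - Y) * (C.H ^ C.α - C.L ^ C.α) / (C.f' Y C.L * C.f' Y C.H) := by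
      rw [← hDiffY]; field_simp
    have eFracZ : 1 / C.f' Z C.L - 1 / C.f' Z C.H
        = (1 - Z) * (C.H ^ C.α - C.L ^ C.α) / (C.f' Z C.L * C.f' Z C.H) := by
      rw [← hDiffZ]; field_simp
    have hnum : (1 - Z) * (C.H ^ C.α - C.L ^ C.α) ≤ (1 - Y) * (C.H ^ C.α - C.L ^ C.α) := by
      have := C.expLH
      nlinarith
    have hnum0 : 0 ≤ (1 - Y) * (C.H ^ C.α - C.L ^ C.α) := by
      have := C.expLH; nlinarith
    have hden : C.f' Y C.L * C.f' Y C.H ≤ C.f' Z C.L * C.f' Z C.H :=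
      mul_le_mul hLYZ hHYZ pHY.le pLZ.le
    have hdenY : 0 < C.f' Y C.L * C.f' Y C.H := mul_pos pLY pHY
    have key0 : 1 / C.f' Z C.L - 1 / C.f' Z C.H ≤ 1 / C.f' Y C.L - 1 / C.f' Y C.H := by
      rw [eFracY, eFracZ]
      exact div_le_div₀ hnum0 hnum hdenY hden
    have key : C.q / C.f' Z C.L - C.q / C.f' Z C.H
        ≤ C.q / C.f' Y C.L - C.q / C.f' Y C.H := by
      have h := mul_le_mul_of_nonneg_left key0 hq0.le
      have e1 : C.q * (1 / C.f' Z C.L - 1 / C.f' Z C.H)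
          = C.q / C.f' Z C.L - C.q / C.f' Z C.H := by ring
      have e2 : C.q * (1 / C.f' Y C.L - 1 / C.f' Y C.H)
          = C.q / C.f' Y C.L - C.q / C.f' Y C.H := by ring
      rw [e1, e2] at h; exact h
    have hKΛ : (0:ℝ) ≤ (C.p - C.c) * C.Λ := mul_nonneg C.hK.le C.hΛ.le
    have hmul := mul_le_mul_of_nonneg_left key hKΛ
    have : C.gainf Z ≤ C.gainf Y := by
      rw [eY, eZ]
      ring_nf at hmul ⊢
      linarith
    linarith
  · -- demand at L is zero at Y: gain increasing from X to Y
    have hdY : C.dem' (C.f' Y C.L) = 0 := le_antisymm (not_lt.1 hd) (C.dem'_nonneg _)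
    have h1 : C.dem' (C.f' X C.H) ≤ C.dem' (C.f' Y C.H) :=
      C.dem'_mono (C.f'_nonneg hX0 hX1 C.hH0) (C.f'_mono_R hXY C.expH_le_one)
    have h2 : 0 ≤ C.dem' (C.f' X C.L) := C.dem'_nonneg _
    have hgX' := hgX
    unfold gainf pper at hgX' ⊢
    rw [hdY]
    have hK := C.hK
    nlinarith [mul_le_mul_of_nonneg_left h1 C.hK.le, mul_nonneg C.hK.le h2]

/- ---------------- absorbing region above ---------------- -/

lemma ncnt_eq_zero : ∀ (N : ℕ) {R : ℝ}, 0 ≤ R → R ≤ 1 →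
    (∀ z, R ≤ z → z ≤ 1 → ¬ 0 < C.gainf z) → C.ncnt N R = 0 := by
  intro N
  induction N with
  | zero => intro R _ _ _; rfl
  | succ N ih =>
      intro R hR0 hR1 hAB
      have hg : ¬ 0 < C.gainf R := hAB R le_rfl hR1
      rw [C.ncnt_succ_nonpos hg]
      exact ih (C.dstepL_nonneg hR0 hR1) (C.dstepL_le_one hR1)
        (fun z hz hz1 => hAB z ((C.dstepL_ge hR1).trans hz) hz1)

/- ---------------- lemma P : count monotone within the interval ---------------- -/

lemma lemmaP : ∀ (N : ℕ) {U V : ℝ}, 0 ≤ U → V ≤ 1 → U ≤ V →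
    0 < C.gainf U → 0 < C.gainf V → C.ncnt N V ≤ C.ncnt N U := by
  intro N
  induction N with
  | zero => intro U V _ _ _ _ _; exact le_rfl
  | succ N ih =>
      intro U V hU0 hV1 hUV hgU hgV
      have hU1 : U ≤ 1 := hUV.trans hV1
      have hV0 : 0 ≤ V := hU0.trans hUV
      rw [C.ncnt_succ_pos hgU, C.ncnt_succ_pos hgV]
      by_cases hg : 0 < C.gainf (C.dstep C.H V)
      · have hUU' : U ≤ C.dstep C.H U := C.dstepH_ge hU1
        have hUV' : C.dstep C.H U ≤ C.dstep C.H V := C.dstepH_mono hU0 hV1 hUV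
        have hgU' : 0 < C.gainf (C.dstep C.H U) :=
          C.gain_between hU0 (C.dstepH_le_one hV1) hUU' hUV' hgU hg
        exact Nat.add_le_add_left
          (ih (C.dstepH_nonneg hU0 hU1) (C.dstepH_le_one hV1) hUV' hgU' hg) _
      · have h0 : C.ncnt N (C.dstep C.H V) = 0 := by
          refine C.ncnt_eq_zero N (C.dstepH_nonneg hV0 hV1) (C.dstepH_le_one hV1) ?_
          intro z hz hz1 hzg
          exact hg (C.gain_between hV0 hz1 (C.dstepH_ge hV1) hz hgV hzg)
        rw [h0]
        exact Nat.add_le_add_left (Nat.zero_le _) _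

/- ---------------- lemma M : one step of H costs at most one naive pick ------- -/

lemma lemmaM : ∀ (N : ℕ) {X Y : ℝ}, 0 ≤ X → Y ≤ 1 → X ≤ Y → Y ≤ C.dstep C.H X →
    C.ncnt N X ≤ C.ncnt N Y + 1 := by
  intro N
  induction N with
  | zero => intro X Y _ _ _ _; exact Nat.le_succ 0
  | succ N ih =>
      intro X Y hX0 hY1 hXY hYSH
      have hX1 : X ≤ 1 := hXY.trans hY1
      have hY0 : 0 ≤ Y := hX0.trans hXY
      by_cases hgX : 0 < C.gainf X
      · by_cases hgY : 0 < C.gainf Y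
        · rw [C.ncnt_succ_pos hgX, C.ncnt_succ_pos hgY]
          have h := ih (C.dstepH_nonneg hX0 hX1) (C.dstepH_le_one hY1)
            (C.dstepH_mono hX0 hY1 hXY)
            (C.dstepH_mono hY0 (C.dstepH_le_one hX1) hYSH)
          omega
        · -- AB above Y
          have hAB : ∀ z, Y ≤ z → z ≤ 1 → ¬ 0 < C.gainf z := by
            intro z hz hz1 hzg
            exact hgY (C.gain_between hX0 hz1 hXY hz hgX hzg)
          have h1 : C.ncnt (N + 1) Y = 0 := C.ncnt_eq_zero (N + 1) hY0 hY1 hAB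
          have h2 : C.ncnt N (C.dstep C.H X) = 0 := by
            refine C.ncnt_eq_zero N (C.dstepH_nonneg hX0 hX1) (C.dstepH_le_one hX1) ?_
            intro z hz hz1
            exact hAB z (hYSH.trans hz) hz1
          rw [C.ncnt_succ_pos hgX, h1, h2]
      · rw [C.ncnt_succ_nonpos hgX]
        have hX'0 : 0 ≤ C.dstep C.L X := C.dstepL_nonneg hX0 hX1
        have hX'1 : C.dstep C.L X ≤ 1 := C.dstepL_le_one hX1
        have hXX' : X ≤ C.dstep C.L X := C.dstepL_ge hX1
        by_cases hX'Y : C.dstep C.L X ≤ Y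
        · have h := ih hX'0 hY1 hX'Y
            (hYSH.trans (C.dstepH_mono hX0 hX'1 hXX'))
          have h2 := C.ncnt_le_succ N Y
          omega
        · push_neg at hX'Y
          by_cases hgY : 0 < C.gainf Y
          · by_cases hgX' : 0 < C.gainf (C.dstep C.L X)
            · have h := C.lemmaP N hY0 hX'1 hX'Y.le hgY hgX'
              have h2 := C.ncnt_le_succ N Y
              omega
            · have h0 : C.ncnt N (C.dstep C.L X) = 0 := by
                refine C.ncnt_eq_zero N hX'0 hX'1 ?_
                intro z hz hz1 hzg
                exact hgX' (C.gain_between hY0 hz1 hX'Y.le hz hgY hzg)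
              rw [h0]; exact Nat.zero_le _
          · rw [C.ncnt_succ_nonpos hgY]
            exact ih hX'0 (C.dstepL_le_one hY1) (C.dstepL_mono hX0 hY1 hXY)
              ((C.dstepL_mono hY0 hX'1 hX'Y.le).trans
                (C.dstep_mono_a hX'0 hX'1 C.hL0 C.expLH C.expH_le_one))

end NVCtx

/- ---------------- bridges to `rep`, `profit`, `naiveRep` ---------------- -/

namespace NVCtx

variable (C : NVCtx)

lemma rep_succ (A : ℕ → ℝ) (R1 : ℝ) (i : ℕ) :
    rep C.α C.w C.Λ C.q A R1 (i + 1)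
      = C.dstep (A i) (rep C.α C.w C.Λ C.q A R1 i) := rfl

lemma rep_shift (A : ℕ → ℝ) (R1 : ℝ) :
    ∀ i, rep C.α C.w C.Λ C.q A R1 (i + 1)
      = rep C.α C.w C.Λ C.q (fun j => A (j + 1)) (C.dstep (A 0) R1) i := by
  intro i
  induction i with
  | zero => rfl
  | succ i ih =>
      rw [C.rep_succ A R1 (i+1), ih]
      rfl

lemma rep_bounds {A : ℕ → ℝ} (hA : ∀ i, A i = C.L ∨ A i = C.H) {R1 : ℝ}
    (h0 : 0 ≤ R1) (h1 : R1 ≤ 1) :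
    ∀ i, 0 ≤ rep C.α C.w C.Λ C.q A R1 i ∧ rep C.α C.w C.Λ C.q A R1 i ≤ 1 := by
  intro i
  induction i with
  | zero => exact ⟨h0, h1⟩
  | succ i ih =>
      rw [C.rep_succ]
      rcases hA i with h | h <;> rw [h]
      · exact ⟨C.dstepL_nonneg ih.1 ih.2, C.dstepL_le_one ih.2⟩
      · exact ⟨C.dstepH_nonneg ih.1 ih.2, C.dstepH_le_one ih.2⟩

lemma rep_mono_R1 {A : ℕ → ℝ} (hA : ∀ i, A i = C.L ∨ A i = C.H) {R R' : ℝ}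
    (h0 : 0 ≤ R) (h1' : R' ≤ 1) (h : R ≤ R') :
    ∀ i, rep C.α C.w C.Λ C.q A R i ≤ rep C.α C.w C.Λ C.q A R' i := by
  intro i
  induction i with
  | zero => exact h
  | succ i ih =>
      rw [C.rep_succ, C.rep_succ]
      have hb := C.rep_bounds hA h0 (h.trans h1') i
      have hb' := C.rep_bounds hA (h0.trans h) h1' i
      rcases hA i with ha | ha <;> rw [ha]
      · exact C.dstepL_mono hb.1 hb'.2 ih
      · exact C.dstepH_mono hb.1 hb'.2 ih

lemma profit_succ (A : ℕ → ℝ) (R1 : ℝ) (N : ℕ) :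
    profit C.α C.w C.Λ C.q C.p C.c C.cA A R1 (N + 1)
      = C.pper R1 (A 0) +
        profit C.α C.w C.Λ C.q C.p C.c C.cA (fun j => A (j + 1)) (C.dstep (A 0) R1) N := by
  unfold profit
  rw [Finset.sum_range_succ']
  have h1 : ∀ i ∈ Finset.range N,
      ((C.p - C.c) * dem C.Λ C.q (frep C.α (rep C.α C.w C.Λ C.q A R1 (i + 1)) (A (i + 1)))
        - C.cA * A (i + 1))
      = ((C.p - C.c) * dem C.Λ C.q
          (frep C.α (rep C.α C.w C.Λ C.q (fun j => A (j + 1)) (C.dstep (A 0) R1) i)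
            ((fun j => A (j + 1)) i)) - C.cA * (fun j => A (j + 1)) i) := by
    intro i _
    rw [C.rep_shift]
  rw [Finset.sum_congr rfl h1]
  have h0 : rep C.α C.w C.Λ C.q A R1 0 = R1 := rfl
  rw [h0]
  unfold pper dem' f'
  ring

lemma profit_mono_R1 {A : ℕ → ℝ} (hA : ∀ i, A i = C.L ∨ A i = C.H) {R R' : ℝ}
    (h0 : 0 ≤ R) (h1' : R' ≤ 1) (h : R ≤ R') (N : ℕ) :
    profit C.α C.w C.Λ C.q C.p C.c C.cA A R N
      ≤ profit C.α C.w C.Λ C.q C.p C.c C.cA A R' N := by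
  unfold profit
  refine Finset.sum_le_sum ?_
  intro i _
  have hrep := C.rep_mono_R1 hA h0 h1' h i
  have hb := C.rep_bounds hA h0 (h.trans h1') i
  have hb' := C.rep_bounds hA (h0.trans h) h1' i
  have hAi : 0 ≤ A i ∧ (A i) ^ C.α ≤ 1 := by
    rcases hA i with ha | ha <;> rw [ha]
    · exact ⟨C.hL0, C.expL_le_one⟩
    · exact ⟨C.hH0, C.expH_le_one⟩
  have hd : dem C.Λ C.q (frep C.α (rep C.α C.w C.Λ C.q A R i) (A i))
      ≤ dem C.Λ C.q (frep C.α (rep C.α C.w C.Λ C.q A R' i) (A i)) :=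
    C.dem'_mono (C.f'_nonneg hb.1 hb.2 hAi.1) (C.f'_mono_R hrep hAi.2)
  nlinarith [mul_le_mul_of_nonneg_left hd C.hK.le]

/- naive trajectory bridges -/

lemma naiveRep_succ (R1 : ℝ) (i : ℕ) :
    naiveRep C.α C.w C.Λ C.q C.p C.c C.cA C.L C.H R1 (i + 1)
      = C.nstep (naiveRep C.α C.w C.Λ C.q C.p C.c C.cA C.L C.H R1 i) := rfl

lemma naiveRep_shift (R1 : ℝ) :
    ∀ i, naiveRep C.α C.w C.Λ C.q C.p C.c C.cA C.L C.H R1 (i + 1)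
      = naiveRep C.α C.w C.Λ C.q C.p C.c C.cA C.L C.H (C.nstep R1) i := by
  intro i
  induction i with
  | zero => rfl
  | succ i ih =>
      rw [C.naiveRep_succ R1 (i+1), ih]
      rfl

lemma ncnt_eq_card : ∀ (N : ℕ) (R1 : ℝ),
    ((Finset.range N).filter
        (fun i => naiveAd C.α C.Λ C.q C.p C.c C.cA C.L C.H
          (naiveRep C.α C.w C.Λ C.q C.p C.c C.cA C.L C.H R1 i) = C.H)).card
      = C.ncnt N R1 := by
  intro N
  induction N with
  | zero => intro R1; rfl
  | succ N ih =>
      intro R1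
      rw [Finset.card_filter, Finset.sum_range_succ']
      have h1 : ∀ i ∈ Finset.range N,
          (if naiveAd C.α C.Λ C.q C.p C.c C.cA C.L C.H
              (naiveRep C.α C.w C.Λ C.q C.p C.c C.cA C.L C.H R1 (i + 1)) = C.H then 1 else 0)
          = (if naiveAd C.α C.Λ C.q C.p C.c C.cA C.L C.H
              (naiveRep C.α C.w C.Λ C.q C.p C.c C.cA C.L C.H (C.nstep R1) i) = C.H
             then 1 else 0) := by
        intro i _
        rw [C.naiveRep_shift]
      rw [Finset.sum_congr rfl h1, ← Finset.card_filter, ih, C.ncnt_succ]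
      show C.ncnt N (C.nstep R1) + (if C.nAd R1 = C.H then 1 else 0)
        = (if C.nAd R1 = C.H then 1 else 0) + C.ncnt N (C.nstep R1)
      rw [Nat.add_comm]

end NVCtx

/- ---------------- the recursively-built aware optimal sequence -------------- -/

/-- prepend a value to a sequence. -/
def consa (x : ℝ) (A : ℕ → ℝ) : ℕ → ℝ
  | 0 => x
  | n + 1 => A n

namespace NVCtx

/-- optimal sequence for horizon `N` starting at reputation `R`.  -/
def Ast (C : NVCtx) : ℕ → ℝ → ℕ → ℝ
  | 0, _ => fun _ => C.L
  | N + 1, R =>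
      if profit C.α C.w C.Λ C.q C.p C.c C.cA (consa C.L (C.Ast N (C.dstep C.L R))) R (N + 1)
          ≤ profit C.α C.w C.Λ C.q C.p C.c C.cA (consa C.H (C.Ast N (C.dstep C.H R))) R (N + 1)
      then consa C.H (C.Ast N (C.dstep C.H R))
      else consa C.L (C.Ast N (C.dstep C.L R))

variable (C : NVCtx)

lemma Ast_values : ∀ (N : ℕ) (R : ℝ) (i : ℕ), C.Ast N R i = C.L ∨ C.Ast N R i = C.H := by
  intro N
  induction N with
  | zero => intro R i; left; rfl
  | succ N ih =>
      intro R i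
      rw [Ast]
      split
      · cases i with
        | zero => right; rfl
        | succ j => exact ih (C.dstep C.H R) j
      · cases i with
        | zero => left; rfl
        | succ j => exact ih (C.dstep C.L R) j

lemma consa_shift (x : ℝ) (A : ℕ → ℝ) : (fun j => consa x A (j + 1)) = A := rfl

lemma profit_consa (x : ℝ) (A : ℕ → ℝ) (R : ℝ) (N : ℕ) :
    profit C.α C.w C.Λ C.q C.p C.c C.cA (consa x A) R (N + 1)
      = C.pper R x + profit C.α C.w C.Λ C.q C.p C.c C.cA A (C.dstep x R) N := by
  rw [C.profit_succ]
  rfl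

lemma Ast_opt : ∀ (N : ℕ) (R : ℝ), 0 ≤ R → R ≤ 1 →
    ∀ B : ℕ → ℝ, (∀ i, B i = C.L ∨ B i = C.H) →
      profit C.α C.w C.Λ C.q C.p C.c C.cA B R N
        ≤ profit C.α C.w C.Λ C.q C.p C.c C.cA (C.Ast N R) R N := by
  intro N
  induction N with
  | zero => intro R _ _ B _; simp [profit]
  | succ N ih =>
      intro R hR0 hR1 B hB
      have hBP : profit C.α C.w C.Λ C.q C.p C.c C.cA B R (N + 1)
          = C.pper R (B 0) +
            profit C.α C.w C.Λ C.q C.p C.c C.cA (fun j => B (j + 1)) (C.dstep (B 0) R) N :=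
        C.profit_succ B R N
      have hBtail : ∀ i, (fun j => B (j + 1)) i = C.L ∨ (fun j => B (j + 1)) i = C.H :=
        fun i => hB (i + 1)
      rw [Ast]
      split
      · rename_i hif
        rcases hB 0 with h0 | h0
        · calc profit C.α C.w C.Λ C.q C.p C.c C.cA B R (N + 1)
              ≤ C.pper R C.L + profit C.α C.w C.Λ C.q C.p C.c C.cA
                  (C.Ast N (C.dstep C.L R)) (C.dstep C.L R) N := by
                rw [hBP, h0]
                exact add_le_add_right
                  (ih (C.dstep C.L R) (C.dstepL_nonneg hR0 hR1) (C.dstepL_le_one hR1)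
                    _ hBtail) _
            _ = profit C.α C.w C.Λ C.q C.p C.c C.cA
                  (consa C.L (C.Ast N (C.dstep C.L R))) R (N + 1) :=
                (C.profit_consa _ _ _ _).symm
            _ ≤ _ := hif
        · calc profit C.α C.w C.Λ C.q C.p C.c C.cA B R (N + 1)
              ≤ C.pper R C.H + profit C.α C.w C.Λ C.q C.p C.c C.cA
                  (C.Ast N (C.dstep C.H R)) (C.dstep C.H R) N := by
                rw [hBP, h0]
                exact add_le_add_right
                  (ih (C.dstep C.H R) (C.dstepH_nonneg hR0 hR1) (C.dstepH_le_one hR1)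
                    _ hBtail) _
            _ = _ := (C.profit_consa _ _ _ _).symm
      · rename_i hif
        push_neg at hif
        rcases hB 0 with h0 | h0
        · calc profit C.α C.w C.Λ C.q C.p C.c C.cA B R (N + 1)
              ≤ C.pper R C.L + profit C.α C.w C.Λ C.q C.p C.c C.cA
                  (C.Ast N (C.dstep C.L R)) (C.dstep C.L R) N := by
                rw [hBP, h0]
                exact add_le_add_right
                  (ih (C.dstep C.L R) (C.dstepL_nonneg hR0 hR1) (C.dstepL_le_one hR1)
                    _ hBtail) _
            _ = _ := (C.profit_consa _ _ _ _).symm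
        · calc profit C.α C.w C.Λ C.q C.p C.c C.cA B R (N + 1)
              ≤ C.pper R C.H + profit C.α C.w C.Λ C.q C.p C.c C.cA
                  (C.Ast N (C.dstep C.H R)) (C.dstep C.H R) N := by
                rw [hBP, h0]
                exact add_le_add_right
                  (ih (C.dstep C.H R) (C.dstepH_nonneg hR0 hR1) (C.dstepH_le_one hR1)
                    _ hBtail) _
            _ = profit C.α C.w C.Λ C.q C.p C.c C.cA
                  (consa C.H (C.Ast N (C.dstep C.H R))) R (N + 1) :=
                (C.profit_consa _ _ _ _).symm
            _ ≤ _ := hif.le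

lemma card_consa (x : ℝ) (A : ℕ → ℝ) (N : ℕ) :
    ((Finset.range (N + 1)).filter (fun i => consa x A i = C.H)).card
      = (if x = C.H then 1 else 0) + ((Finset.range N).filter (fun i => A i = C.H)).card := by
  rw [Finset.card_filter, Finset.sum_range_succ']
  have h1 : ∀ i ∈ Finset.range N,
      (if consa x A (i + 1) = C.H then 1 else 0) = (if A i = C.H then 1 else 0) := by
    intro i _; rfl
  rw [Finset.sum_congr rfl h1, ← Finset.card_filter]
  have h0 : consa x A 0 = x := rfl
  rw [h0]
  omega

lemma Ast_count : ∀ (N : ℕ) (R : ℝ), 0 ≤ R → R ≤ 1 →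
    C.ncnt N R ≤ ((Finset.range N).filter (fun i => C.Ast N R i = C.H)).card := by
  intro N
  induction N with
  | zero => intro R _ _; exact le_rfl
  | succ N ih =>
      intro R hR0 hR1
      have hDL0 : 0 ≤ C.dstep C.L R := C.dstepL_nonneg hR0 hR1
      have hDL1 : C.dstep C.L R ≤ 1 := C.dstepL_le_one hR1
      have hDH0 : 0 ≤ C.dstep C.H R := C.dstepH_nonneg hR0 hR1
      have hDH1 : C.dstep C.H R ≤ 1 := C.dstepH_le_one hR1
      by_cases hg : 0 < C.gainf R
      · -- naive picks H; show the H-branch is chosen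
        have hchain : profit C.α C.w C.Λ C.q C.p C.c C.cA
              (consa C.L (C.Ast N (C.dstep C.L R))) R (N + 1)
            ≤ profit C.α C.w C.Λ C.q C.p C.c C.cA
              (consa C.H (C.Ast N (C.dstep C.H R))) R (N + 1) := by
          rw [C.profit_consa, C.profit_consa]
          have s1 : profit C.α C.w C.Λ C.q C.p C.c C.cA
                (C.Ast N (C.dstep C.L R)) (C.dstep C.L R) N
              ≤ profit C.α C.w C.Λ C.q C.p C.c C.cA
                (C.Ast N (C.dstep C.L R)) (C.dstep C.H R) N :=
            C.profit_mono_R1 (C.Ast_values N (C.dstep C.L R)) hDL0 hDH1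
              (C.dstepLH hR0 hR1) N
          have s2 : profit C.α C.w C.Λ C.q C.p C.c C.cA
                (C.Ast N (C.dstep C.L R)) (C.dstep C.H R) N
              ≤ profit C.α C.w C.Λ C.q C.p C.c C.cA
                (C.Ast N (C.dstep C.H R)) (C.dstep C.H R) N :=
            C.Ast_opt N (C.dstep C.H R) hDH0 hDH1 _ (C.Ast_values N (C.dstep C.L R))
          have s3 : C.pper R C.L ≤ C.pper R C.H := by
            have := hg; unfold gainf at this; linarith
          linarith
        rw [Ast, if_pos hchain, C.card_consa, if_pos rfl, C.ncnt_succ_pos hg]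
        exact Nat.add_le_add_left (ih (C.dstep C.H R) hDH0 hDH1) 1
      · rw [C.ncnt_succ_nonpos hg, Ast]
        split
        · -- H branch chosen
          rw [C.card_consa, if_pos rfl]
          have h1 := ih (C.dstep C.H R) hDH0 hDH1
          have h2 : C.ncnt N (C.dstep C.L R) ≤ C.ncnt N (C.dstep C.H R) + 1 :=
            C.lemmaM N hDL0 hDH1 (C.dstepLH hR0 hR1)
              (C.dstepH_mono hR0 hDL1 (C.dstepL_ge hR1))
          omega
        · -- L branch chosen
          rw [C.card_consa, if_neg (ne_of_lt C.hLH)]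
          have h1 := ih (C.dstep C.L R) hDL0 hDL1
          omega

end NVCtx

/-- Proposition 3: under variable capacity there is an optimal (aware)
advertisement sequence that uses at least as many high-level advertisements as
the naive myopic firm. -/
theorem naive_never_more_high_ads_than_aware
    (Λ c p cA m u α w L H R1 q : ℝ) (N : ℕ)
    (hΛ : 0 < Λ) (hc : 0 < c) (hcp : c < p) (hcA : 0 ≤ cA)
    (hm : 0 < m) (hu : 0 ≤ u) (hqdef : q = (u + p) / m) (hq1 : q < 1)
    (hα : 0 < α) (hw0 : 0 ≤ w) (hw1 : w ≤ 1)
    (hL0 : 0 ≤ L) (hLH : L < H) (hH1 : H ≤ 1)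
    (hR10 : 0 ≤ R1) (hR11 : R1 ≤ 1) :
    ∃ Astar : ℕ → ℝ, (∀ i, Astar i = L ∨ Astar i = H) ∧
      (∀ B : ℕ → ℝ, (∀ i, B i = L ∨ B i = H) →
        profit α w Λ q p c cA B R1 N ≤ profit α w Λ q p c cA Astar R1 N) ∧
      ((Finset.range N).filter
          (fun i => naiveAd α Λ q p c cA L H (naiveRep α w Λ q p c cA L H R1 i) = H)).card ≤
        ((Finset.range N).filter (fun i => Astar i = H)).card := by
  have hq0 : 0 < q := by
    rw [hqdef]
    have hup : 0 < u + p := by linarith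
    exact div_pos hup hm
  let C : NVCtx := ⟨Λ, c, p, cA, α, w, L, H, q, hΛ, hcp, hq0, hα, hw0, hw1, hL0, hLH, hH1⟩
  refine ⟨C.Ast N R1, ?_, ?_, ?_⟩
  · exact C.Ast_values N R1
  · exact fun B hB => C.Ast_opt N R1 hR10 hR11 B hB
  · calc ((Finset.range N).filter
          (fun i => naiveAd α Λ q p c cA L H (naiveRep α w Λ q p c cA L H R1 i) = H)).card
        = C.ncnt N R1 := C.ncnt_eq_card N R1
      _ ≤ ((Finset.range N).filter (fun i => C.Ast N R1 i = C.H)).card :=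
          C.Ast_count N R1 hR10 hR11
end
end
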